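/- Fix n >= 2 and let m > 2n be an integer, Delta = 1/(m+2n+1), and alpha in (0, 1/2). Then there exist two mixtures of exponentials P1 and P2 on [0, infinity), with at most n+1 components each, all exponents in (0,1] and pairwise separated by at least Delta (with exponents of P1 and P2 interlaced), total non-leading coefficient mass alpha in each, such that the squared Hellinger distance satisfies H^2(P1, P2) <= alpha^2 (4n-2)^2 * (Delta (2n-1))^{4n-4}. -/

import Mathlib

open MeasureTheory

open Finset Set in
private lemma sum_range_even_odd' (f : ℕ → ℝ) (n : ℕ) :
    ∑ k ∈ range (2*n), f k = (∑ j ∈ range n, f (2*j)) + ∑ j ∈ range n, f (2*j+1) := by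
  induction n with
  | zero => simp
  | succ n ih =>
      rw [show 2*(n+1) = (2*n)+1+1 by ring, Finset.sum_range_succ, Finset.sum_range_succ, ih,
        Finset.sum_range_succ, Finset.sum_range_succ]
      ring

open Finset in
private lemma even_choose_sum' (n : ℕ) (hn : 1 ≤ n) :
    ∑ j ∈ range n, ((2*n-1).choose (2*j) : ℝ) = 2^(2*n-2) ∧
    ∑ j ∈ range n, ((2*n-1).choose (2*j+1) : ℝ) = 2^(2*n-2) := by
  set K := 2*n-1 with hK
  have hKn : 2*n = K+1 := by omega
  have hsum : (∑ j ∈ range n, (K.choose (2*j) : ℝ)) + ∑ j ∈ range n, (K.choose (2*j+1) : ℝ)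
      = 2^K := by
    rw [← sum_range_even_odd' (fun k => (K.choose k : ℝ)) n, hKn]
    have : ((∑ i ∈ range (K+1), K.choose i : ℕ) : ℝ) = ((2^K : ℕ) : ℝ) := by
      exact_mod_cast Nat.sum_range_choose K
    push_cast at this
    convert this using 1
  have halt : (∑ j ∈ range n, (K.choose (2*j) : ℝ)) - ∑ j ∈ range n, (K.choose (2*j+1) : ℝ)
      = 0 := by
    have h0 : ∑ k ∈ range (K+1), (-1 : ℤ)^k * K.choose k = 0 := by
      rw [Int.alternating_sum_range_choose]
      simp only [if_neg (by omega : K ≠ 0)]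
    have h0' : ∑ k ∈ range (2*n), ((-1 : ℝ)^k * K.choose k) = 0 := by
      have : ((∑ k ∈ range (K+1), (-1 : ℤ)^k * K.choose k : ℤ) : ℝ) = 0 := by
        rw [h0]; norm_num
      push_cast at this
      rw [hKn]
      exact this
    rw [sum_range_even_odd' (fun k => (-1:ℝ)^k * K.choose k) n] at h0'
    simp only [pow_mul, pow_succ] at h0'
    norm_num at h0'
    linarith [h0']
  have h2 : (2:ℝ)^K = 2^(2*n-2) * 2 := by
    rw [← pow_succ]
    congr 1
    omega
  constructor <;> nlinarith [hsum, halt, h2]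

open Finset in
private lemma one_sub_pow_expand' (M : ℕ) (y : ℝ) :
    (1-y)^M = ∑ k ∈ range (M+1), (-1:ℝ)^k * (M.choose k) * y^k := by
  rw [show (1:ℝ) - y = -y + 1 by ring, add_pow]
  refine Finset.sum_congr rfl fun k _ => ?_
  rw [neg_pow]
  ring

open Finset in
private lemma poly_identity' (L : ℕ) (r y : ℝ) :
    ∑ k ∈ range (L+2), (-1:ℝ)^k * ((L+1).choose k) * (r + k) * y^k
      = r * (1-y)^(L+1) - (L+1) * y * (1-y)^L := by
  have h1 : ∑ k ∈ range (L+2), (-1:ℝ)^k * ((L+1).choose k) * r * y^k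
      = r * (1-y)^(L+1) := by
    rw [one_sub_pow_expand' (L+1) y, Finset.mul_sum]
    exact Finset.sum_congr rfl fun k _ => by ring
  have h2 : ∑ k ∈ range (L+2), (-1:ℝ)^k * ((L+1).choose k) * (k:ℕ) * y^k
      = -((L+1) * y * (1-y)^L) := by
    rw [Finset.sum_range_succ' (fun k => (-1:ℝ)^k * ((L+1).choose k) * (k:ℕ) * y^k) (L+1)]
    have key : ∀ i : ℕ, (-1:ℝ)^(i+1) * ((L+1).choose (i+1)) * ((i+1 : ℕ) : ℝ) * y^(i+1)
        = -((L+1) * y * ((-1:ℝ)^i * (L.choose i) * y^i)) := by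
      intro i
      have h' : ((L+1:ℕ) : ℝ) * (L.choose i) = ((L+1).choose (i+1) : ℝ) * ((i+1 : ℕ) : ℝ) := by
        exact_mod_cast congrArg (fun z : ℕ => (z:ℝ)) (Nat.add_one_mul_choose_eq L i)
      push_cast at h' ⊢
      linear_combination ((-1:ℝ)^i * y^i * y) * h'
    have e1 : ∑ i ∈ range (L+1), ((-1:ℝ)^(i+1) * ((L+1).choose (i+1)) * ((i+1:ℕ):ℝ) * y^(i+1))
        = ∑ i ∈ range (L+1), -(((L:ℝ)+1) * y * ((-1:ℝ)^i * (L.choose i) * y^i)) := by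
      refine Finset.sum_congr rfl fun i _ => ?_
      have := key i
      push_cast at this ⊢
      linarith [this]
    simp only [e1]
    rw [Finset.sum_neg_distrib, ← Finset.mul_sum, ← one_sub_pow_expand' L y]
    ring
  have hsplit := Finset.sum_congr rfl (fun k (_ : k ∈ range (L+2)) =>
    (by push_cast; ring : (-1:ℝ)^k * ((L+1).choose k) * (r + k) * y^k
      = (-1:ℝ)^k * ((L+1).choose k) * r * y^k + (-1:ℝ)^k * ((L+1).choose k) * (k:ℕ) * y^k))
  rw [hsplit, Finset.sum_add_distrib, h1, h2]
  ring

private lemma sqrt_diff_sq_le' (f g : ℝ) (hf : 0 < f) (hg : 0 ≤ g) :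
    (Real.sqrt f - Real.sqrt g)^2 ≤ (f - g)^2 / f := by
  rw [le_div_iff₀ hf]
  nlinarith [Real.sq_sqrt hf.le, Real.sq_sqrt hg, Real.sqrt_nonneg f, Real.sqrt_nonneg g,
    sq_nonneg (Real.sqrt f - Real.sqrt g), sq_nonneg (Real.sqrt f + Real.sqrt g),
    mul_nonneg (Real.sqrt_nonneg f) (Real.sqrt_nonneg g),
    sq_nonneg (Real.sqrt f * Real.sqrt g)]

open Set Real in
private lemma int_pow_exp' (K : ℕ) {r : ℝ} (hr : 0 < r) :
    ∫ t in Ioi (0:ℝ), t^K * Real.exp (-(r*t)) = (K.factorial : ℝ) / r^(K+1) := by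
  have h := integral_rpow_mul_exp_neg_mul_Ioi (a := (K:ℝ)+1) (r := r) (by positivity) hr
  rw [show ((K:ℝ)+1) - 1 = (K:ℝ) by ring] at h
  have heq : ∀ t ∈ Ioi (0:ℝ), t ^ (K:ℝ) * Real.exp (-(r*t)) = t^K * Real.exp (-(r*t)) := by
    intro t ht
    rw [Real.rpow_natCast]
  rw [setIntegral_congr_fun measurableSet_Ioi heq] at h
  rw [h, show ((K:ℝ)+1) = ((K+1 : ℕ) : ℝ) by push_cast; ring, Real.rpow_natCast]
  rw [show ((K+1:ℕ):ℝ) = (K:ℝ)+1 by push_cast; ring, Real.Gamma_nat_eq_factorial,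
    div_pow, one_pow]
  ring

open Set Real in
private lemma integrableOn_pow_exp' (K : ℕ) {r : ℝ} (hr : 0 < r) :
    IntegrableOn (fun t : ℝ => t^K * Real.exp (-(r*t))) (Ioi 0) := by
  have h := integrableOn_rpow_mul_exp_neg_mul_rpow (p := 1) (s := (K:ℝ)) (b := r)
    (by exact_mod_cast neg_one_lt_zero.trans_le (Nat.cast_nonneg K)) zero_lt_one hr
  refine h.congr_fun (fun t ht => ?_) measurableSet_Ioi
  dsimp only
  rw [Real.rpow_natCast, Real.rpow_one]
  ring_nf


private lemma sq_sub_le_two_sq (u v : ℝ) : (u-v)^2 ≤ 2*u^2 + 2*v^2 := by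
  nlinarith [sq_nonneg (u+v)]

private lemma one_sub_exp_neg_le (s : ℝ) : 1 - Real.exp (-s) ≤ s := by
  linarith [Real.add_one_le_exp (-s)]

set_option maxHeartbeats 1000000 in
open Set Real in
private lemma hellinger_aux (n m : ℕ) (hn : 2 ≤ n) (hm : 2*n < m)
    (α D A : ℝ) (hDdef : D = 1/((m:ℝ)+2*n+1)) (hAdef : A = α/2^(2*n-2))
    (hα0 : 0 < α) (hα2 : α < 1/2)
    (a b lam mu : Fin n → ℝ)
    (ha : ∀ j, a j = A * ((2*n-1).choose (2*(j:ℕ)) : ℝ))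
    (hb : ∀ j, b j = A * ((2*n-1).choose (2*(j:ℕ)+1) : ℝ))
    (hlam : ∀ j, lam j = ((m:ℝ)+1+2*(j:ℕ)) * D)
    (hmu : ∀ j, mu j = ((m:ℝ)+2+2*(j:ℕ)) * D) :
    (1 / 2) * (∫ t in Set.Ioi (0 : ℝ),
        (Real.sqrt ((1-α) * D * Real.exp (-(D * t)) +
            ∑ j, a j * lam j * Real.exp (-(lam j * t))) -
         Real.sqrt ((1-α) * D * Real.exp (-(D * t)) +
            ∑ j, b j * mu j * Real.exp (-(mu j * t)))) ^ 2) ≤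
      α ^ 2 * (4 * (n : ℝ) - 2) ^ 2 *
        ((1 / ((m : ℝ) + 2 * n + 1)) * (2 * (n : ℝ) - 1)) ^ (4 * n - 4) := by
  obtain ⟨p, rfl⟩ : ∃ p, n = p + 2 := ⟨n - 2, by omega⟩
  simp only [show 2*(p+2)-1 = 2*p+3 from by omega, show 2*(p+2)-2 = 2*p+2 from by omega,
    show 4*(p+2)-4 = 4*p+4 from by omega] at ha hb hAdef ⊢
  have hα1 : (0:ℝ) < 1 - α := by linarith
  have hmp : 2*p+5 ≤ m := by omega
  have hmpr : 2*(p:ℝ)+5 ≤ (m:ℝ) := by exact_mod_cast hmp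
  have hMpos : (0:ℝ) < (m:ℝ) + 2*((p:ℕ):ℝ) + 5 := by positivity
  have hDdef' : D = 1/((m:ℝ) + 2*(p:ℝ) + 5) := by
    rw [hDdef]; push_cast; ring_nf
  have hD : 0 < D := by rw [hDdef']; positivity
  have hApos : 0 < A := by rw [hAdef]; positivity
  set Q : ℝ := 2*(m:ℝ)+1 with hQdef
  have hQ : (0:ℝ) < Q := by positivity
  have hQ4 : (4:ℝ) ≤ Q := by rw [hQdef]; linarith
  set ρ : ℝ := Q * D with hρdef
  have hρ : 0 < ρ := by positivity
  set C1 : ℝ := 2*A^2*D/(1-α) * (((m:ℝ)+1)^2 * D^(4*p+6)) with hC1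
  set C2 : ℝ := 2*A^2*D/(1-α) * ((2*(p:ℝ)+3)^2 * D^(4*p+4)) with hC2
  have key : ∀ t ∈ Ioi (0:ℝ),
      (Real.sqrt ((1-α) * D * Real.exp (-(D * t)) +
          ∑ j, a j * lam j * Real.exp (-(lam j * t))) -
       Real.sqrt ((1-α) * D * Real.exp (-(D * t)) +
          ∑ j, b j * mu j * Real.exp (-(mu j * t)))) ^ 2
      ≤ C1 * (t^(4*p+6) * Real.exp (-(ρ*t))) + C2 * (t^(4*p+4) * Real.exp (-(ρ*t))) := by
    intro t ht
    rw [Set.mem_Ioi] at ht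
    set y : ℝ := Real.exp (-(D*t)) with hy
    have hy0 : 0 < y := Real.exp_pos _
    have hy1 : y ≤ 1 := by
      rw [hy, ← Real.exp_zero]
      exact Real.exp_le_exp.mpr (neg_nonpos.mpr (by positivity))
    have h1y : 1 - y ≤ D*t := by
      have := one_sub_exp_neg_le (D*t)
      rw [hy]
      linarith
    have h1y0 : 0 ≤ 1 - y := by linarith
    have hsa : 0 ≤ ∑ j, a j * lam j * Real.exp (-(lam j * t)) :=
      Finset.sum_nonneg fun j _ => by
        rw [ha j, hlam j]
        positivity
    have hsb : 0 ≤ ∑ j, b j * mu j * Real.exp (-(mu j * t)) :=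
      Finset.sum_nonneg fun j _ => by
        rw [hb j, hmu j]
        positivity
    set Fv : ℝ := (1-α) * D * y + ∑ j, a j * lam j * Real.exp (-(lam j * t)) with hFv
    set Gv : ℝ := (1-α) * D * y + ∑ j, b j * mu j * Real.exp (-(mu j * t)) with hGv
    have hFlb : (1-α)*D*y ≤ Fv := by rw [hFv]; linarith
    have hFpos : 0 < Fv := lt_of_lt_of_le (by positivity) hFlb
    have hGpos : 0 ≤ Gv := by rw [hGv]; positivity
    have step1 : (Real.sqrt Fv - Real.sqrt Gv)^2 ≤ (Fv - Gv)^2 / ((1-α)*D*y) :=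
      (sqrt_diff_sq_le' Fv Gv hFpos hGpos).trans
        (div_le_div_of_nonneg_left (sq_nonneg _) (by positivity) hFlb)
    -- difference formula
    have hek : ∀ k : ℕ, Real.exp (-((((m:ℝ)+1+k)*D)*t))
        = Real.exp (-(((m:ℝ)+1)*D*t)) * y^k := by
      intro k
      rw [hy, ← Real.exp_nat_mul, ← Real.exp_add]
      congr 1
      ring
    have hTa : ∀ j : Fin (p+2), a j * lam j * Real.exp (-(lam j * t))
        = (fun k : ℕ => A * (((2*p+3).choose k):ℝ) * (((m:ℝ)+1+k)*D)
            * Real.exp (-((((m:ℝ)+1+k)*D)*t))) (2*(j:ℕ)) := by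
      intro j
      rw [ha j, hlam j]
      push_cast
      ring_nf
    have hTb : ∀ j : Fin (p+2), b j * mu j * Real.exp (-(mu j * t))
        = (fun k : ℕ => A * (((2*p+3).choose k):ℝ) * (((m:ℝ)+1+k)*D)
            * Real.exp (-((((m:ℝ)+1+k)*D)*t))) (2*(j:ℕ)+1) := by
      intro j
      rw [hb j, hmu j]
      push_cast
      ring_nf
    set Tf : ℕ → ℝ := fun k : ℕ => A * (((2*p+3).choose k):ℝ) * (((m:ℝ)+1+k)*D)
        * Real.exp (-((((m:ℝ)+1+k)*D)*t)) with hTf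
    have hdiff : Fv - Gv = A * D * Real.exp (-(((m:ℝ)+1)*D*t)) *
        (((m:ℝ)+1) * (1-y)^(2*p+3) - (2*(p:ℝ)+3) * y * (1-y)^(2*p+2)) := by
      have e1 : Fv - Gv = (∑ j ∈ Finset.range (p+2), Tf (2*j))
          - ∑ j ∈ Finset.range (p+2), Tf (2*j+1) := by
        rw [hFv, hGv]
        have ea : ∑ j : Fin (p+2), a j * lam j * Real.exp (-(lam j * t))
            = ∑ j ∈ Finset.range (p+2), Tf (2*j) := by
          rw [← Fin.sum_univ_eq_sum_range (fun j => Tf (2*j)) (p+2)]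
          exact Finset.sum_congr rfl fun j _ => hTa j
        have eb : ∑ j : Fin (p+2), b j * mu j * Real.exp (-(mu j * t))
            = ∑ j ∈ Finset.range (p+2), Tf (2*j+1) := by
          rw [← Fin.sum_univ_eq_sum_range (fun j => Tf (2*j+1)) (p+2)]
          exact Finset.sum_congr rfl fun j _ => hTb j
        rw [ea, eb]
        ring
      have e2 : (∑ j ∈ Finset.range (p+2), Tf (2*j))
          - ∑ j ∈ Finset.range (p+2), Tf (2*j+1)
          = ∑ k ∈ Finset.range (2*(p+2)), (-1:ℝ)^k * Tf k := by
        rw [sum_range_even_odd' (fun k => (-1:ℝ)^k * Tf k) (p+2)]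
        have o1 : ∀ j : ℕ, (-1:ℝ)^(2*j) = 1 := fun j => by
          rw [pow_mul]
          norm_num
        have o2 : ∀ j : ℕ, (-1:ℝ)^(2*j+1) = -1 := fun j => by
          rw [pow_succ, o1]
          norm_num
        rw [Finset.sum_congr rfl (fun j _ => by rw [o1 j, one_mul] :
            ∀ j ∈ Finset.range (p+2), (-1:ℝ)^(2*j) * Tf (2*j) = Tf (2*j)),
          Finset.sum_congr rfl (fun j _ => by rw [o2 j] :
            ∀ j ∈ Finset.range (p+2), (-1:ℝ)^(2*j+1) * Tf (2*j+1) = -1 * Tf (2*j+1))]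
        simp only [neg_one_mul, Finset.sum_neg_distrib]
        ring
      have e3 : ∑ k ∈ Finset.range (2*(p+2)), (-1:ℝ)^k * Tf k
          = A * D * Real.exp (-(((m:ℝ)+1)*D*t)) *
            ∑ k ∈ Finset.range (2*p+2+2), (-1:ℝ)^k * (((2*p+2+1).choose k):ℝ)
              * (((m:ℝ)+1) + k) * y^k := by
        rw [Finset.mul_sum, show 2*(p+2) = 2*p+2+2 from by omega]
        refine Finset.sum_congr rfl fun k _ => ?_
        rw [hTf]
        simp only
        rw [hek k, show 2*p+2+1 = 2*p+3 from by omega]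
        ring
      rw [e1, e2, e3, poly_identity' (2*p+2) ((m:ℝ)+1) y]
      have c1 : ((2*p+2:ℕ):ℝ) + 1 = 2*(p:ℝ)+3 := by push_cast; ring
      rw [c1, show 2*p+2+1 = 2*p+3 from by omega]
    -- bound the square of the difference
    set u : ℝ := ((m:ℝ)+1) * (1-y)^(2*p+3) with hu
    set v : ℝ := (2*(p:ℝ)+3) * y * (1-y)^(2*p+2) with hv
    have hE2 : Real.exp (-(((m:ℝ)+1)*D*t))^2 = Real.exp (-(ρ*t)) * y := by
      rw [hy, sq, ← Real.exp_add, ← Real.exp_add]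
      congr 1
      rw [hρdef, hQdef]
      ring
    have hsq : (Fv - Gv)^2 = A^2*D^2*(Real.exp (-(ρ*t)) * y) * (u - v)^2 := by
      rw [hdiff, ← hE2]
      ring
    have step2 : (Fv - Gv)^2 / ((1-α)*D*y)
        = (A^2*D/(1-α)) * Real.exp (-(ρ*t)) * (u-v)^2 := by
      rw [hsq]
      field_simp
    have hub : u^2 ≤ ((m:ℝ)+1)^2 * (D*t)^(4*p+6) := by
      have h1 : (1-y)^(4*p+6) ≤ (D*t)^(4*p+6) := pow_le_pow_left₀ h1y0 h1y _
      have h2 : u^2 = ((m:ℝ)+1)^2 * (1-y)^(4*p+6) := by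
        rw [hu, mul_pow, ← pow_mul, show (2*p+3)*2 = 4*p+6 from by ring]
      rw [h2]
      exact mul_le_mul_of_nonneg_left h1 (sq_nonneg _)
    have hvb : v^2 ≤ (2*(p:ℝ)+3)^2 * (D*t)^(4*p+4) := by
      have h1 : (1-y)^(4*p+4) ≤ (D*t)^(4*p+4) := pow_le_pow_left₀ h1y0 h1y _
      have h2 : v^2 = (2*(p:ℝ)+3)^2 * y^2 * (1-y)^(4*p+4) := by
        rw [hv, mul_pow, mul_pow, ← pow_mul, show (2*p+2)*2 = 4*p+4 from by ring]
      rw [h2]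
      have hy2 : (2*(p:ℝ)+3)^2 * y^2 ≤ (2*(p:ℝ)+3)^2 := by
        calc (2*(p:ℝ)+3)^2 * y^2 ≤ (2*(p:ℝ)+3)^2 * 1 :=
              mul_le_mul_of_nonneg_left (pow_le_one₀ hy0.le hy1) (sq_nonneg _)
        _ = (2*(p:ℝ)+3)^2 := mul_one _
      exact mul_le_mul hy2 h1 (by positivity) (sq_nonneg _)
    have huv : (u-v)^2 ≤ 2*(((m:ℝ)+1)^2 * (D*t)^(4*p+6)) + 2*((2*(p:ℝ)+3)^2 * (D*t)^(4*p+4)) := by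
      linarith [sq_sub_le_two_sq u v, hub, hvb]
    calc (Real.sqrt Fv - Real.sqrt Gv)^2 ≤ (Fv - Gv)^2 / ((1-α)*D*y) := step1
    _ = (A^2*D/(1-α)) * Real.exp (-(ρ*t)) * (u-v)^2 := step2
    _ ≤ (A^2*D/(1-α)) * Real.exp (-(ρ*t)) *
          (2*(((m:ℝ)+1)^2 * (D*t)^(4*p+6)) + 2*((2*(p:ℝ)+3)^2 * (D*t)^(4*p+4))) := by
        have hc : (0:ℝ) ≤ (A^2*D/(1-α)) * Real.exp (-(ρ*t)) := by positivity
        exact mul_le_mul_of_nonneg_left huv hc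
    _ = C1 * (t^(4*p+6) * Real.exp (-(ρ*t))) + C2 * (t^(4*p+4) * Real.exp (-(ρ*t))) := by
        rw [hC1, hC2, mul_pow D t (4*p+6), mul_pow D t (4*p+4)]
        ring
  -- integral computation
  have hI1 : Integrable (fun t : ℝ => t^(4*p+6) * Real.exp (-(ρ*t)))
      (volume.restrict (Ioi 0)) := integrableOn_pow_exp' _ hρ
  have hI2 : Integrable (fun t : ℝ => t^(4*p+4) * Real.exp (-(ρ*t)))
      (volume.restrict (Ioi 0)) := integrableOn_pow_exp' _ hρ
  have hI1' := hI1.const_mul C1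
  have hI2' := hI2.const_mul C2
  have hBint : Integrable (fun t : ℝ => C1 * (t^(4*p+6) * Real.exp (-(ρ*t)))
      + C2 * (t^(4*p+4) * Real.exp (-(ρ*t)))) (volume.restrict (Ioi 0)) := hI1'.add hI2'
  have hmono : (∫ t in Set.Ioi (0:ℝ),
      (Real.sqrt ((1-α) * D * Real.exp (-(D * t)) +
          ∑ j, a j * lam j * Real.exp (-(lam j * t))) -
       Real.sqrt ((1-α) * D * Real.exp (-(D * t)) +
          ∑ j, b j * mu j * Real.exp (-(mu j * t)))) ^ 2)
      ≤ ∫ t in Set.Ioi (0:ℝ), (C1 * (t^(4*p+6) * Real.exp (-(ρ*t)))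
          + C2 * (t^(4*p+4) * Real.exp (-(ρ*t)))) :=
    integral_mono_of_nonneg (Filter.Eventually.of_forall fun t => sq_nonneg _) hBint
      ((ae_restrict_iff' measurableSet_Ioi).mpr (Filter.Eventually.of_forall key))
  set f1 : ℝ := ((4*p+6).factorial : ℝ) with hf1def
  set f2 : ℝ := ((4*p+4).factorial : ℝ) with hf2def
  have hf1pos : 0 < f1 := by rw [hf1def]; exact_mod_cast Nat.factorial_pos _
  have hf2pos : 0 < f2 := by rw [hf2def]; exact_mod_cast Nat.factorial_pos _
  have hval : (∫ t in Set.Ioi (0:ℝ), (C1 * (t^(4*p+6) * Real.exp (-(ρ*t)))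
      + C2 * (t^(4*p+4) * Real.exp (-(ρ*t)))))
      = C1 * (f1/ρ^(4*p+6+1)) + C2 * (f2/ρ^(4*p+4+1)) := by
    rw [integral_add hI1' hI2', integral_const_mul, integral_const_mul,
      int_pow_exp' _ hρ, int_pow_exp' _ hρ]
  -- final numeric bound
  have hQm : ((m:ℝ)+1) ≤ Q := by rw [hQdef]; linarith [Nat.cast_nonneg (α := ℝ) m]
  have hDQ : 1/Q ≤ D := by
    rw [hDdef', hQdef]
    apply one_div_le_one_div_of_le
    · positivity
    · linarith
  have hAsq : A^2 = α^2 / 2^(4*p+4) := by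
    rw [hAdef, div_pow, ← pow_mul, show (2*p+2)*2 = 4*p+4 from by ring]
  have hf1b : f1 ≤ 2^(4*p+4) * (2*(p:ℝ)+3)^(4*p+4) * (4*(p:ℝ)+6)^2 := by
    have h1 : f1 ≤ ((4*p+6:ℕ):ℝ)^(4*p+6) := by
      rw [hf1def]
      exact_mod_cast Nat.factorial_le_pow (4*p+6)
    have h2 : ((4*p+6:ℕ):ℝ) = 4*(p:ℝ)+6 := by push_cast; ring
    rw [h2] at h1
    calc f1 ≤ (4*(p:ℝ)+6)^(4*p+6) := h1
    _ = (4*(p:ℝ)+6)^(4*p+4) * (4*(p:ℝ)+6)^2 := by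
        rw [← pow_add, show 4*p+4+2 = 4*p+6 from by omega]
    _ = 2^(4*p+4) * (2*(p:ℝ)+3)^(4*p+4) * (4*(p:ℝ)+6)^2 := by
        rw [show (4*(p:ℝ)+6) = 2*(2*(p:ℝ)+3) from by ring, mul_pow]
  have hf2b : f2 ≤ 2^(4*p+4) * (2*(p:ℝ)+3)^(4*p+4) := by
    have h1 : f2 ≤ ((4*p+4:ℕ):ℝ)^(4*p+4) := by
      rw [hf2def]
      exact_mod_cast Nat.factorial_le_pow (4*p+4)
    have h2 : ((4*p+4:ℕ):ℝ) = 4*(p:ℝ)+4 := by push_cast; ring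
    rw [h2] at h1
    calc f2 ≤ (4*(p:ℝ)+4)^(4*p+4) := h1
    _ ≤ (4*(p:ℝ)+6)^(4*p+4) := by
        apply pow_le_pow_left₀ (by positivity)
        linarith
    _ = 2^(4*p+4) * (2*(p:ℝ)+3)^(4*p+4) := by
        rw [show (4*(p:ℝ)+6) = 2*(2*(p:ℝ)+3) from by ring, mul_pow]
  refine le_trans (mul_le_mul_of_nonneg_left (hmono.trans_eq hval)
    (by norm_num : (0:ℝ) ≤ 1/2)) ?_
  have hugly : α^2 * (4*(p:ℝ)+6)^2 * (D*(2*(p:ℝ)+3))^(4*p+4)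
      = α ^ 2 * (4 * ((p+2 : ℕ):ℝ) - 2) ^ 2 *
        (1 / ((m:ℝ) + 2 * ((p+2:ℕ):ℝ) + 1) * (2 * ((p+2:ℕ):ℝ) - 1)) ^ (4 * p + 4) := by
    rw [← hDdef]
    push_cast
    ring
  rw [← hugly]
  have e2 : A^2/(1-α) ≤ 2*A^2 := by
    rw [div_le_iff₀ hα1]
    have h12 : (1:ℝ) ≤ 2*(1-α) := by linarith
    calc A^2 = A^2 * 1 := (mul_one _).symm
    _ ≤ A^2 * (2*(1-α)) := mul_le_mul_of_nonneg_left h12 (sq_nonneg A)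
    _ = 2*A^2*(1-α) := by ring
  have e1 : (1/2)*(C1 * (f1/ρ^(4*p+6+1)) + C2 * (f2/ρ^(4*p+4+1)))
      = (A^2/(1-α)) * ((((m:ℝ)+1)^2 * f1) / (Q^(4*p+4+1) * Q^2)
          + ((2*(p:ℝ)+3)^2 * f2) / Q^(4*p+4+1)) := by
    rw [hC1, hC2, hρdef, mul_pow Q D (4*p+6+1), mul_pow Q D (4*p+4+1),
      show (4*p+6+1) = (4*p+4+1)+2 from by omega]
    field_simp
    ring
  have hterm1 : (((m:ℝ)+1)^2 * f1) / (Q^(4*p+4+1) * Q^2) ≤ f1 / Q^(4*p+4+1) := by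
    rw [div_le_div_iff₀ (by positivity) (by positivity)]
    have hmQ2 : ((m:ℝ)+1)^2 ≤ Q^2 := pow_le_pow_left₀ (by positivity) hQm 2
    calc ((m:ℝ)+1)^2 * f1 * Q^(4*p+4+1) ≤ Q^2 * f1 * Q^(4*p+4+1) := by
          exact mul_le_mul_of_nonneg_right
            (mul_le_mul_of_nonneg_right hmQ2 hf1pos.le) (by positivity)
    _ = f1 * (Q^(4*p+4+1) * Q^2) := by ring
  have hterm2 : ((2*(p:ℝ)+3)^2 * f2) / Q^(4*p+4+1)
      ≤ ((4*(p:ℝ)+6)^2 * f2) / Q^(4*p+4+1) := by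
    have hnum : (2*(p:ℝ)+3)^2 * f2 ≤ (4*(p:ℝ)+6)^2 * f2 :=
      mul_le_mul_of_nonneg_right
        (pow_le_pow_left₀ (by positivity) (by linarith) 2) hf2pos.le
    exact div_le_div_of_nonneg_right hnum (by positivity)
  calc (1/2)*(C1 * (f1/ρ^(4*p+6+1)) + C2 * (f2/ρ^(4*p+4+1)))
      = (A^2/(1-α)) * ((((m:ℝ)+1)^2 * f1) / (Q^(4*p+4+1) * Q^2)
          + ((2*(p:ℝ)+3)^2 * f2) / Q^(4*p+4+1)) := e1
  _ ≤ (2*A^2) * ((((m:ℝ)+1)^2 * f1) / (Q^(4*p+4+1) * Q^2)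
          + ((2*(p:ℝ)+3)^2 * f2) / Q^(4*p+4+1)) :=
      mul_le_mul_of_nonneg_right e2 (by positivity)
  _ ≤ (2*A^2) * ((f1 / Q^(4*p+4+1)) + ((4*(p:ℝ)+6)^2 * f2) / Q^(4*p+4+1)) :=
      mul_le_mul_of_nonneg_left (add_le_add hterm1 hterm2) (by positivity)
  _ ≤ (2*A^2) * (((2^(4*p+4) * (2*(p:ℝ)+3)^(4*p+4) * (4*(p:ℝ)+6)^2) / Q^(4*p+4+1))
          + ((4*(p:ℝ)+6)^2 * (2^(4*p+4) * (2*(p:ℝ)+3)^(4*p+4))) / Q^(4*p+4+1)) := by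
      apply mul_le_mul_of_nonneg_left _ (by positivity)
      apply add_le_add
      · exact div_le_div_of_nonneg_right hf1b (by positivity)
      · exact div_le_div_of_nonneg_right
          (mul_le_mul_of_nonneg_left hf2b (by positivity)) (by positivity)
  _ = (4*α^2/Q^(4*p+4+1)) * ((2*(p:ℝ)+3)^(4*p+4) * (4*(p:ℝ)+6)^2) := by
      rw [hAsq]
      field_simp
      ring
  _ ≤ α^2 * (4*(p:ℝ)+6)^2 * ((2*(p:ℝ)+3)^(4*p+4) / Q^(4*p+4)) := by
      have h4 : 4/Q ≤ 1 := (div_le_one hQ).mpr hQ4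
      have heq : (4*α^2/Q^(4*p+4+1)) * ((2*(p:ℝ)+3)^(4*p+4) * (4*(p:ℝ)+6)^2)
          = (4/Q) * (α^2 * (4*(p:ℝ)+6)^2 * ((2*(p:ℝ)+3)^(4*p+4) / Q^(4*p+4))) := by
        rw [pow_succ]
        field_simp
        ring
      rw [heq]
      calc (4/Q) * (α^2 * (4*(p:ℝ)+6)^2 * ((2*(p:ℝ)+3)^(4*p+4) / Q^(4*p+4)))
          ≤ 1 * (α^2 * (4*(p:ℝ)+6)^2 * ((2*(p:ℝ)+3)^(4*p+4) / Q^(4*p+4))) :=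
            mul_le_mul_of_nonneg_right h4 (by positivity)
      _ = α^2 * (4*(p:ℝ)+6)^2 * ((2*(p:ℝ)+3)^(4*p+4) / Q^(4*p+4)) := one_mul _
  _ ≤ α^2 * (4*(p:ℝ)+6)^2 * (D*(2*(p:ℝ)+3))^(4*p+4) := by
      have hre : (2*(p:ℝ)+3)^(4*p+4) / Q^(4*p+4) = ((1/Q)*(2*(p:ℝ)+3))^(4*p+4) := by
        rw [mul_pow, div_pow, one_pow]
        ring
      rw [hre]
      have hbase : (1/Q)*(2*(p:ℝ)+3) ≤ D*(2*(p:ℝ)+3) :=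
        mul_le_mul_of_nonneg_right hDQ (by positivity)
      exact mul_le_mul_of_nonneg_left
        (pow_le_pow_left₀ (by positivity) hbase _) (by positivity)

theorem turan_hard_mixtures (n m : ℕ) (hn : 2 ≤ n) (hm : 2 * n < m)
    (α : ℝ) (hα : α ∈ Set.Ioo (0 : ℝ) (1 / 2)) :
    ∃ (ν c0 d0 : ℝ) (a b lam mu : Fin n → ℝ),
      -- normalization: all exponents in (0,1]
      (0 < ν ∧ ν ≤ 1) ∧ (∀ j, 0 < lam j ∧ lam j ≤ 1) ∧ (∀ j, 0 < mu j ∧ mu j ≤ 1) ∧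
      -- valid mixture coefficients
      0 ≤ c0 ∧ 0 ≤ d0 ∧ (∀ j, 0 ≤ a j) ∧ (∀ j, 0 ≤ b j) ∧
      c0 + ∑ j, a j = 1 ∧ d0 + ∑ j, b j = 1 ∧
      -- non-leading coefficient mass α in each
      ∑ j, a j = α ∧ ∑ j, b j = α ∧
      -- exponents interlaced: ν < λ₁ < μ₁ < λ₂ < μ₂ < ⋯ < λ_n < μ_n
      (∀ j, ν < lam j) ∧ (∀ j, lam j < mu j) ∧
      (∀ j k : Fin n, j < k → mu j < lam k) ∧
      -- pairwise separation at least Δ = 1/(m+2n+1)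
      (∀ x ∈ {ν} ∪ Set.range lam ∪ Set.range mu,
        ∀ y ∈ {ν} ∪ Set.range lam ∪ Set.range mu,
          x ≠ y → 1 / ((m : ℝ) + 2 * n + 1) ≤ |x - y|) ∧
      -- squared Hellinger distance between the two mixture densities
      (1 / 2) * (∫ t in Set.Ioi (0 : ℝ),
          (Real.sqrt (c0 * ν * Real.exp (-(ν * t)) +
              ∑ j, a j * lam j * Real.exp (-(lam j * t))) -
           Real.sqrt (d0 * ν * Real.exp (-(ν * t)) +
              ∑ j, b j * mu j * Real.exp (-(mu j * t)))) ^ 2) ≤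
        α ^ 2 * (4 * (n : ℝ) - 2) ^ 2 *
          ((1 / ((m : ℝ) + 2 * n + 1)) * (2 * (n : ℝ) - 1)) ^ (4 * n - 4) := by
  obtain ⟨hα0, hα2⟩ := hα
  have hnr : (2:ℝ) ≤ (n:ℝ) := by exact_mod_cast hn
  have hmr : 2*(n:ℝ) < (m:ℝ) := by exact_mod_cast hm
  have hMrpos : (0:ℝ) < (m:ℝ) + 2*n + 1 := by positivity
  set D : ℝ := 1 / ((m:ℝ) + 2*n + 1) with hDdef
  have hD : 0 < D := by positivity
  set A : ℝ := α / 2^(2*n-2) with hAdef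
  have hApos : 0 < A := by positivity
  have hjle : ∀ j : Fin n, ((j:ℕ):ℝ) ≤ (n:ℝ) - 1 := by
    intro j
    have h2 : (j:ℕ) + 1 ≤ n := j.isLt
    have := (Nat.cast_le (α := ℝ)).mpr h2
    push_cast at this
    linarith
  refine ⟨D, 1-α, 1-α,
    fun j => A * ((2*n-1).choose (2*(j:ℕ)) : ℝ),
    fun j => A * ((2*n-1).choose (2*(j:ℕ)+1) : ℝ),
    fun j => ((m:ℝ)+1+2*(j:ℕ)) * D,
    fun j => ((m:ℝ)+2+2*(j:ℕ)) * D,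
    ⟨hD, ?_⟩, ?_, ?_, ?_, ?_, ?_, ?_, ?_, ?_, ?_, ?_, ?_, ?_, ?_, ?_, ?_⟩
  · rw [hDdef, div_le_one hMrpos]
    linarith
  · intro j
    have := hjle j
    dsimp only
    constructor
    · positivity
    · rw [hDdef, mul_one_div, div_le_one hMrpos]
      linarith
  · intro j
    have := hjle j
    dsimp only
    constructor
    · positivity
    · rw [hDdef, mul_one_div, div_le_one hMrpos]
      linarith
  · linarith
  · linarith
  · intro j; positivity
  · intro j; positivity
  · -- c0 + ∑ a = 1
    have hs := (even_choose_sum' n (by omega)).1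
    rw [Fin.sum_univ_eq_sum_range (fun j => A * ((2*n-1).choose (2*j) : ℝ)) n,
      ← Finset.mul_sum, hs, hAdef]
    field_simp
    ring
  · have hs := (even_choose_sum' n (by omega)).2
    rw [Fin.sum_univ_eq_sum_range (fun j => A * ((2*n-1).choose (2*j+1) : ℝ)) n,
      ← Finset.mul_sum, hs, hAdef]
    field_simp
    ring
  · have hs := (even_choose_sum' n (by omega)).1
    rw [Fin.sum_univ_eq_sum_range (fun j => A * ((2*n-1).choose (2*j) : ℝ)) n,
      ← Finset.mul_sum, hs, hAdef]
    field_simp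
  · have hs := (even_choose_sum' n (by omega)).2
    rw [Fin.sum_univ_eq_sum_range (fun j => A * ((2*n-1).choose (2*j+1) : ℝ)) n,
      ← Finset.mul_sum, hs, hAdef]
    field_simp
  · intro j
    dsimp only
    rw [hDdef, mul_one_div, lt_div_iff₀ hMrpos, div_mul_cancel₀ _ (ne_of_gt hMrpos)]
    have : (0:ℝ) ≤ ((j:ℕ):ℝ) := Nat.cast_nonneg _
    linarith
  · intro j
    have : (0:ℝ) < D := hD
    dsimp only
    nlinarith [Nat.cast_nonneg (α := ℝ) (j:ℕ)]
  · intro j k hjk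
    have hjk' : ((j:ℕ):ℝ) + 1 ≤ ((k:ℕ):ℝ) := by exact_mod_cast hjk
    dsimp only
    nlinarith [hD]
  · -- separation
    intro x hx y hy hxy
    have hmem : ∀ z ∈ ({D} ∪ Set.range (fun j : Fin n => ((m:ℝ)+1+2*(j:ℕ)) * D)
        ∪ Set.range (fun j : Fin n => ((m:ℝ)+2+2*(j:ℕ)) * D)), ∃ k : ℕ, z = (k:ℝ) * D := by
      intro z hz
      rcases hz with (hz | hz) | hz
      · exact ⟨1, by simpa using hz⟩
      · obtain ⟨j, rfl⟩ := hz
        exact ⟨m+1+2*(j:ℕ), by push_cast; ring⟩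
      · obtain ⟨j, rfl⟩ := hz
        exact ⟨m+2+2*(j:ℕ), by push_cast; ring⟩
    obtain ⟨k1, rfl⟩ := hmem x hx
    obtain ⟨k2, rfl⟩ := hmem y hy
    have hk : k1 ≠ k2 := by
      rintro rfl
      exact hxy rfl
    have habs : (1:ℝ) ≤ |(k1:ℝ) - (k2:ℝ)| := by
      have hne : (k1:ℤ) - (k2:ℤ) ≠ 0 := sub_ne_zero.mpr (by exact_mod_cast hk)
      have h1 : (1:ℤ) ≤ |(k1:ℤ) - (k2:ℤ)| := Int.one_le_abs hne
      have h' : ((1:ℤ):ℝ) ≤ ((|(k1:ℤ) - (k2:ℤ)| : ℤ) : ℝ) := by exact_mod_cast h1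
      push_cast at h'
      exact h'
    have heq : |(k1:ℝ)*D - (k2:ℝ)*D| = |(k1:ℝ) - (k2:ℝ)| * D := by
      rw [← sub_mul, abs_mul, abs_of_pos hD]
    rw [heq]
    nlinarith [hD, habs]
  · dsimp only
    exact hellinger_aux n m hn hm α D A hDdef hAdef hα0 hα2 _ _ _ _
      (fun j => rfl) (fun j => rfl) (fun j => rfl) (fun j => rfl)
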